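/- For all real parameters η > 0, φ > 0 and every real s with 0 ≤ s < 1, the probability generating function of the PCD is ∑_{x=0}^∞ s^x·p(x) = (η²/(φ+η))·[((η−s+1)³ + φη²)/(η−s+1)⁴]. -/

import Mathlib

/-- The probability generating function of the PCD. -/
theorem pcd_pgf (η φ s : ℝ) (hη : 0 < η) (hφ : 0 < φ) (hs0 : 0 ≤ s) (hs1 : s < 1) :
    ∑' x : ℕ, s ^ x *
        ((η ^ 2 / ((φ + η) * (1 + η) ^ (x + 4)))
          * ((1 + η) ^ 3
            + (φ * η ^ 2 / 6) * ((x : ℝ) + 1) * ((x : ℝ) + 2) * ((x : ℝ) + 3)))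
      = (η ^ 2 / (φ + η)) * (((η - s + 1) ^ 3 + φ * η ^ 2) / (η - s + 1) ^ 4) := by
  have h1η : (0:ℝ) < 1 + η := by linarith
  set q : ℝ := s / (1 + η) with hq
  have hq0 : 0 ≤ q := div_nonneg hs0 h1η.le
  have hq1 : q < 1 := by
    rw [hq, div_lt_one h1η]; linarith
  have hqn : ‖q‖ < 1 := by rwa [Real.norm_eq_abs, abs_of_nonneg hq0]
  have hg : HasSum (fun x : ℕ => q ^ x) (1 / (1 - q)) := by
    simpa [one_div] using hasSum_geometric_of_lt_one hq0 hq1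
  have hc : HasSum (fun x : ℕ => ((x + 3).choose 3 : ℝ) * q ^ x) (1 / (1 - q) ^ 4) :=
    hasSum_choose_mul_geometric_of_norm_lt_one 3 hqn
  set A : ℝ := η ^ 2 / ((φ + η) * (1 + η))
  set B : ℝ := η ^ 2 * (φ * η ^ 2) / ((φ + η) * (1 + η) ^ 4)
  have hsum : HasSum (fun x : ℕ => s ^ x *
        ((η ^ 2 / ((φ + η) * (1 + η) ^ (x + 4)))
          * ((1 + η) ^ 3
            + (φ * η ^ 2 / 6) * ((x : ℝ) + 1) * ((x : ℝ) + 2) * ((x : ℝ) + 3))))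
      (A * (1 / (1 - q)) + B * (1 / (1 - q) ^ 4)) := by
    have := (hg.mul_left A).add (hc.mul_left B)
    refine this.congr_fun fun x => ?_
    have hch : ((x + 3).choose 3 : ℝ) = ((x:ℝ)+1)*((x:ℝ)+2)*((x:ℝ)+3) / 6 := by
      have h6 : 6 * (x + 3).choose 3 = (x + 3) * (x + 2) * (x + 1) := by
        have := Nat.descFactorial_eq_factorial_mul_choose (x + 3) 3
        simp [Nat.descFactorial_succ, Nat.descFactorial_zero, Nat.factorial] at this
        rw [← this]; ring
      have := congrArg (fun n : ℕ => (n : ℝ)) h6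
      push_cast at this
      linarith
    have hpow : s ^ x / (1 + η) ^ (x + 4) = q ^ x / (1 + η) ^ 4 := by
      rw [hq, div_pow, pow_add]
      field_simp
    rw [hch, hq]
    simp only [A, B, div_pow, pow_add]
    field_simp
  rw [hsum.tsum_eq]
  have hd : η - s + 1 > 0 := by linarith
  have h1mq : 1 - q = (η - s + 1) / (1 + η) := by
    rw [hq]; field_simp; ring
  rw [h1mq]
  simp only [A, B]
  field_simp
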